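/- Let a1, a2 ≥ 2 be integers. The images of the monomials X̄1^{b1} X̄2^{b2} with 0 ≤ b1 < a2 and 0 ≤ b2 < a1 form a ℂ-basis of the Milnor ring Q_{W^T} = ℂ[X̄1, X̄2]/Jac(W^T) of the dual loop potential W^T = X̄1 X̄2^{a1} + X̄2 X̄1^{a2}; in particular dim_ℂ Q_{W^T} = a1*a2. -/

import Mathlib

noncomputable section

open MvPolynomial

/-- The Berglund–Hübsch dual `W^T = X̄1 X̄2^a1 + X̄2 X̄1^a2` of the loop
potential `W = X1^a1 X2 + X2^a2 X1`. -/
def dualLoopPotential (a1 a2 : ℕ) : MvPolynomial (Fin 2) ℂ :=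
  X 0 * X 1 ^ a1 + X 1 * X 0 ^ a2

/-- The Jacobian ideal of the dual loop potential. -/
def dualLoopJac (a1 a2 : ℕ) : Ideal (MvPolynomial (Fin 2) ℂ) :=
  Ideal.span {pderiv 0 (dualLoopPotential a1 a2), pderiv 1 (dualLoopPotential a1 a2)}

lemma g1_eq (m n : ℕ) : pderiv 0 (dualLoopPotential (m+2) (n+2)) =
    monomial (Finsupp.single 1 (m+2)) 1
      + monomial (Finsupp.single 0 (n+1) + Finsupp.single 1 1) ((n:ℂ)+2) := by
  have : pderiv 0 (dualLoopPotential (m+2) (n+2)) =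
      X 1 ^ (m+2) + C ((n:ℂ)+2) * (X 0 ^ (n+1) * X 1 ^ 1) := by
    simp [dualLoopPotential, pderiv_mul, pderiv_pow, pderiv_X_self, pderiv_X_of_ne,
      map_add, map_natCast, map_ofNat]
    push_cast
    ring
  rw [this]
  rw [X_pow_eq_monomial, X_pow_eq_monomial, X_pow_eq_monomial, monomial_mul, C_mul_monomial]
  simp

lemma g2_eq (m n : ℕ) : pderiv 1 (dualLoopPotential (m+2) (n+2)) =
    monomial (Finsupp.single 0 1 + Finsupp.single 1 (m+1)) ((m:ℂ)+2)
      + monomial (Finsupp.single 0 (n+2)) 1 := by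
  have : pderiv 1 (dualLoopPotential (m+2) (n+2)) =
      C ((m:ℂ)+2) * (X 0 ^ 1 * X 1 ^ (m+1)) + X 0 ^ (n+2) := by
    simp [dualLoopPotential, pderiv_mul, pderiv_pow, pderiv_X_self, pderiv_X_of_ne,
      map_add, map_natCast, map_ofNat]
    push_cast
    ring
  rw [this]
  rw [X_pow_eq_monomial, X_pow_eq_monomial, X_pow_eq_monomial, monomial_mul, C_mul_monomial]
  simp

def vfun (m n i j : ℕ) : Fin (n+2) × Fin (m+2) → ℂ :=
  if hij : i < n+2 ∧ j < m+2 then Pi.single (⟨i, hij.1⟩, ⟨j, hij.2⟩) 1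
  else if h2 : i = 0 ∧ j ≤ 2*m+2 then
    (-(n:ℂ)-2) • (Pi.single ((⟨n+1, by omega⟩ : Fin (n+2)), (⟨j-m-1, by omega⟩ : Fin (m+2))) 1 :
      Fin (n+2) × Fin (m+2) → ℂ)
  else if h3 : j = 0 ∧ i ≤ 2*n+2 then
    (-(m:ℂ)-2) • (Pi.single ((⟨i-n-1, by omega⟩ : Fin (n+2)), (⟨m+1, by omega⟩ : Fin (m+2))) 1 :
      Fin (n+2) × Fin (m+2) → ℂ)
  else 0

def NF (m n : ℕ) : MvPolynomial (Fin 2) ℂ →ₗ[ℂ] (Fin (n+2) × Fin (m+2) → ℂ) :=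
  (basisMonomials (Fin 2) ℂ).constr ℂ (fun e => vfun m n (e 0) (e 1))

lemma NF_monomial (m n : ℕ) (e : Fin 2 →₀ ℕ) (c : ℂ) :
    NF m n (monomial e c) = c • vfun m n (e 0) (e 1) := by
  have h1 : monomial e c = c • monomial e (1:ℂ) := by rw [smul_monomial, smul_eq_mul, mul_one]
  rw [h1, map_smul, NF]
  congr 1
  have := Module.Basis.constr_basis (basisMonomials (Fin 2) ℂ) ℂ (fun e => vfun m n (e 0) (e 1)) e
  rwa [coe_basisMonomials] at this

lemma single_cancel {ι : Type*} [DecidableEq ι] (c1 c2 : ℂ) (hc : c1 + c2 = 0) {p q : ι}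
    (h : p = q) :
    c1 • (Pi.single p (1:ℂ) : ι → ℂ) + c2 • (Pi.single q (1:ℂ) : ι → ℂ) = 0 := by
  subst h; rw [← add_smul, hc, zero_smul]

lemma key1 (m n i j : ℕ) :
    vfun m n i (j+(m+2)) + ((n:ℂ)+2) • vfun m n (i+(n+1)) (j+1) = 0 := by
  unfold vfun
  split_ifs <;>
    first
      | omega
      | exact absurd (‹False ∧ _›).1 not_false
      | exact single_cancel _ _ (by ring) (by simp only [Prod.mk.injEq, Fin.mk.injEq]; omega)
      | simp

lemma key2 (m n i j : ℕ) :
    ((m:ℂ)+2) • vfun m n (i+1) (j+(m+1)) + vfun m n (i+(n+2)) j = 0 := by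
  unfold vfun
  split_ifs <;>
    first
      | omega
      | exact absurd (‹False ∧ _›).1 not_false
      | exact single_cancel _ _ (by ring) (by simp only [Prod.mk.injEq, Fin.mk.injEq]; omega)
      | simp

lemma NF_mul_g1 (m n : ℕ) (u : MvPolynomial (Fin 2) ℂ) :
    NF m n (u * pderiv 0 (dualLoopPotential (m+2) (n+2))) = 0 := by
  induction u using MvPolynomial.induction_on' with
  | add p q hp hq => rw [add_mul, map_add, hp, hq, add_zero]
  | monomial e c =>
    rw [g1_eq, mul_add, monomial_mul, monomial_mul, map_add, NF_monomial, NF_monomial]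
    have h0 : ((e + Finsupp.single 1 (m+2) : Fin 2 →₀ ℕ)) 0 = e 0 := by
      simp [Finsupp.single_apply]
    have h1 : ((e + Finsupp.single 1 (m+2) : Fin 2 →₀ ℕ)) 1 = e 1 + (m+2) := by
      simp
    have h2 : ((e + (Finsupp.single 0 (n+1) + Finsupp.single 1 1) : Fin 2 →₀ ℕ)) 0 = e 0 + (n+1) := by
      simp [Finsupp.single_apply]
    have h3 : ((e + (Finsupp.single 0 (n+1) + Finsupp.single 1 1) : Fin 2 →₀ ℕ)) 1 = e 1 + 1 := by
      simp [Finsupp.single_apply]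
    rw [h0, h1, h2, h3, mul_one, mul_comm c ((n:ℂ)+2), mul_smul, smul_comm ((n:ℂ)+2) c, ← smul_add, key1, smul_zero]

lemma NF_mul_g2 (m n : ℕ) (u : MvPolynomial (Fin 2) ℂ) :
    NF m n (u * pderiv 1 (dualLoopPotential (m+2) (n+2))) = 0 := by
  induction u using MvPolynomial.induction_on' with
  | add p q hp hq => rw [add_mul, map_add, hp, hq, add_zero]
  | monomial e c =>
    rw [g2_eq, mul_add, monomial_mul, monomial_mul, map_add, NF_monomial, NF_monomial]
    have h0 : ((e + (Finsupp.single 0 1 + Finsupp.single 1 (m+1)) : Fin 2 →₀ ℕ)) 0 = e 0 + 1 := by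
      simp [Finsupp.single_apply]
    have h1 : ((e + (Finsupp.single 0 1 + Finsupp.single 1 (m+1)) : Fin 2 →₀ ℕ)) 1 = e 1 + (m+1) := by
      simp [Finsupp.single_apply]
    have h2 : ((e + Finsupp.single 0 (n+2) : Fin 2 →₀ ℕ)) 0 = e 0 + (n+2) := by simp
    have h3 : ((e + Finsupp.single 0 (n+2) : Fin 2 →₀ ℕ)) 1 = e 1 := by simp [Finsupp.single_apply]
    rw [h0, h1, h2, h3, mul_one, mul_comm c ((m:ℂ)+2), mul_smul, smul_comm ((m:ℂ)+2) c, ← smul_add, key2, smul_zero]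

lemma NF_Jac (m n : ℕ) {p : MvPolynomial (Fin 2) ℂ} (hp : p ∈ dualLoopJac (m+2) (n+2)) :
    NF m n p = 0 := by
  rw [dualLoopJac, Ideal.mem_span_pair] at hp
  obtain ⟨u, v, h⟩ := hp
  rw [← h, map_add, NF_mul_g1, NF_mul_g2, add_zero]

lemma g1_X (m n : ℕ) : pderiv 0 (dualLoopPotential (m+2) (n+2)) =
    X 1 ^ (m+2) + C ((n:ℂ)+2) * (X 0 ^ (n+1) * X 1) := by
  simp [dualLoopPotential, pderiv_mul, pderiv_pow, pderiv_X_self, pderiv_X_of_ne,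
    map_add, map_natCast, map_ofNat]
  ring

lemma g2_X (m n : ℕ) : pderiv 1 (dualLoopPotential (m+2) (n+2)) =
    C ((m:ℂ)+2) * (X 0 * X 1 ^ (m+1)) + X 0 ^ (n+2) := by
  simp [dualLoopPotential, pderiv_mul, pderiv_pow, pderiv_X_self, pderiv_X_of_ne,
    map_add, map_natCast, map_ofNat]
  ring

lemma ccoef (m n : ℕ) : ((m:ℂ)+2)*((n:ℂ)+2) - 1 ≠ 0 := by
  have h : (((m+2)*(n+2) : ℕ) : ℂ) = ((m:ℂ)+2)*((n:ℂ)+2) := by push_cast; ring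
  rw [← h, sub_ne_zero]
  intro hcon
  have h1 : ((m+2)*(n+2) : ℕ) = 1 := by exact_mod_cast hcon
  have h4 : 4 ≤ (m+2)*(n+2) := Nat.mul_le_mul (by omega : 2 ≤ m+2) (by omega : 2 ≤ n+2)
  omega

lemma memA (m n : ℕ) : (X 0 ^ (n+2) * X 1 : MvPolynomial (Fin 2) ℂ) ∈ dualLoopJac (m+2) (n+2) := by
  have h1 : C (((m:ℂ)+2)*((n:ℂ)+2) - 1) * (X 0 ^ (n+2) * X 1 : MvPolynomial (Fin 2) ℂ)
      ∈ dualLoopJac (m+2) (n+2) := by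
    rw [dualLoopJac]
    refine Ideal.mem_span_pair.mpr ⟨C ((m:ℂ)+2) * X 0, -(X 1), ?_⟩
    rw [g1_X, g2_X]
    simp only [map_sub, map_mul, map_add, map_natCast, map_ofNat, map_one]
    ring
  have h2 := Ideal.mul_mem_left _ (C (((m:ℂ)+2)*((n:ℂ)+2) - 1)⁻¹) h1
  rwa [← mul_assoc, ← C_mul, inv_mul_cancel₀ (ccoef m n), C_1, one_mul] at h2

lemma memB (m n : ℕ) : (X 0 * X 1 ^ (m+2) : MvPolynomial (Fin 2) ℂ) ∈ dualLoopJac (m+2) (n+2) := by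
  have h1 : C (((m:ℂ)+2)*((n:ℂ)+2) - 1) * (X 0 * X 1 ^ (m+2) : MvPolynomial (Fin 2) ℂ)
      ∈ dualLoopJac (m+2) (n+2) := by
    rw [dualLoopJac]
    refine Ideal.mem_span_pair.mpr ⟨-(X 0), C ((n:ℂ)+2) * X 1, ?_⟩
    rw [g1_X, g2_X]
    simp only [map_sub, map_mul, map_add, map_natCast, map_ofNat, map_one]
    ring
  have h2 := Ideal.mul_mem_left _ (C (((m:ℂ)+2)*((n:ℂ)+2) - 1)⁻¹) h1
  rwa [← mul_assoc, ← C_mul, inv_mul_cancel₀ (ccoef m n), C_1, one_mul] at h2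

lemma memg1 (m n : ℕ) : pderiv 0 (dualLoopPotential (m+2) (n+2)) ∈ dualLoopJac (m+2) (n+2) :=
  Ideal.subset_span (by simp)

lemma memg2 (m n : ℕ) : pderiv 1 (dualLoopPotential (m+2) (n+2)) ∈ dualLoopJac (m+2) (n+2) :=
  Ideal.subset_span (by simp)

lemma zero_case (m n i j : ℕ) (h : (n+2 ≤ i ∧ 1 ≤ j) ∨ (1 ≤ i ∧ m+2 ≤ j)) :
    (X 0 ^ i * X 1 ^ j : MvPolynomial (Fin 2) ℂ) ∈ dualLoopJac (m+2) (n+2) := by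
  rcases h with ⟨hi, hj⟩ | ⟨hi, hj⟩
  · obtain ⟨i', rfl⟩ : ∃ i', i = (n+2) + i' := ⟨i-(n+2), by omega⟩
    obtain ⟨j', rfl⟩ : ∃ j', j = 1 + j' := ⟨j-1, by omega⟩
    have he : (X 0 ^ ((n+2)+i') * X 1 ^ (1+j') : MvPolynomial (Fin 2) ℂ)
        = (X 0 ^ i' * X 1 ^ j') * (X 0 ^ (n+2) * X 1) := by ring
    rw [he]; exact Ideal.mul_mem_left _ _ (memA m n)
  · obtain ⟨i', rfl⟩ : ∃ i', i = 1 + i' := ⟨i-1, by omega⟩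
    obtain ⟨j', rfl⟩ : ∃ j', j = (m+2) + j' := ⟨j-(m+2), by omega⟩
    have he : (X 0 ^ (1+i') * X 1 ^ ((m+2)+j') : MvPolynomial (Fin 2) ℂ)
        = (X 0 ^ i' * X 1 ^ j') * (X 0 * X 1 ^ (m+2)) := by ring
    rw [he]; exact Ideal.mul_mem_left _ _ (memB m n)

lemma mk_C_mul (J : Ideal (MvPolynomial (Fin 2) ℂ)) (c : ℂ) (p : MvPolynomial (Fin 2) ℂ) :
    Ideal.Quotient.mk J (C c * p) = c • Ideal.Quotient.mk J p := by
  rw [← smul_eq_C_mul, ← Ideal.Quotient.mkₐ_eq_mk ℂ J, map_smul]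

lemma relA (m n i' : ℕ) :
    (X 0 ^ ((n+2)+i') + C ((m:ℂ)+2) * (X 0 ^ (i'+1) * X 1 ^ (m+1)) : MvPolynomial (Fin 2) ℂ)
      ∈ dualLoopJac (m+2) (n+2) := by
  have he : (X 0 ^ ((n+2)+i') + C ((m:ℂ)+2) * (X 0 ^ (i'+1) * X 1 ^ (m+1)) : MvPolynomial (Fin 2) ℂ)
      = X 0 ^ i' * pderiv 1 (dualLoopPotential (m+2) (n+2)) := by
    rw [g2_X]; ring
  rw [he]; exact Ideal.mul_mem_left _ _ (memg2 m n)

lemma relB (m n j' : ℕ) :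
    (X 1 ^ ((m+2)+j') + C ((n:ℂ)+2) * (X 0 ^ (n+1) * X 1 ^ (j'+1)) : MvPolynomial (Fin 2) ℂ)
      ∈ dualLoopJac (m+2) (n+2) := by
  have he : (X 1 ^ ((m+2)+j') + C ((n:ℂ)+2) * (X 0 ^ (n+1) * X 1 ^ (j'+1)) : MvPolynomial (Fin 2) ℂ)
      = X 1 ^ j' * pderiv 0 (dualLoopPotential (m+2) (n+2)) := by
    rw [g1_X]; ring
  rw [he]; exact Ideal.mul_mem_left _ _ (memg1 m n)

def fam (m n : ℕ) : Fin (n+2) × Fin (m+2) → MvPolynomial (Fin 2) ℂ ⧸ dualLoopJac (m+2) (n+2) :=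
  fun b => Ideal.Quotient.mk (dualLoopJac (m+2) (n+2)) (X 0 ^ (b.1:ℕ) * X 1 ^ (b.2:ℕ))

lemma mem_span_pow (m n i j : ℕ) :
    Ideal.Quotient.mk (dualLoopJac (m+2) (n+2)) (X 0 ^ i * X 1 ^ j)
      ∈ Submodule.span ℂ (Set.range (fam m n)) := by
  by_cases hi : i < n+2 <;> by_cases hj : j < m+2
  · exact Submodule.subset_span ⟨(⟨i,hi⟩,⟨j,hj⟩), rfl⟩
  · by_cases hi0 : i = 0
    · subst hi0
      obtain ⟨j', rfl⟩ : ∃ j', j = (m+2)+j' := ⟨j-(m+2), by omega⟩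
      have h0 := Ideal.Quotient.eq_zero_iff_mem.mpr (relB m n j')
      rw [map_add, mk_C_mul] at h0
      have h2 := eq_neg_of_add_eq_zero_left h0
      rw [pow_zero, one_mul, h2]
      refine Submodule.neg_mem _ (Submodule.smul_mem _ _ ?_)
      by_cases hj' : j'+1 < m+2
      · exact Submodule.subset_span ⟨((⟨n+1, by omega⟩ : Fin (n+2)), (⟨j'+1, hj'⟩ : Fin (m+2))), rfl⟩
      · rw [Ideal.Quotient.eq_zero_iff_mem.mpr
          (zero_case m n (n+1) (j'+1) (Or.inr ⟨by omega, by omega⟩))]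
        exact zero_mem _
    · rw [Ideal.Quotient.eq_zero_iff_mem.mpr (zero_case m n i j (Or.inr ⟨by omega, by omega⟩))]
      exact zero_mem _
  · by_cases hj0 : j = 0
    · subst hj0
      obtain ⟨i', rfl⟩ : ∃ i', i = (n+2)+i' := ⟨i-(n+2), by omega⟩
      have h0 := Ideal.Quotient.eq_zero_iff_mem.mpr (relA m n i')
      rw [map_add, mk_C_mul] at h0
      have h2 := eq_neg_of_add_eq_zero_left h0
      rw [pow_zero, mul_one, h2]
      refine Submodule.neg_mem _ (Submodule.smul_mem _ _ ?_)
      by_cases hi' : i'+1 < n+2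
      · exact Submodule.subset_span ⟨((⟨i'+1, hi'⟩ : Fin (n+2)), (⟨m+1, by omega⟩ : Fin (m+2))), rfl⟩
      · rw [Ideal.Quotient.eq_zero_iff_mem.mpr
          (zero_case m n (i'+1) (m+1) (Or.inl ⟨by omega, by omega⟩))]
        exact zero_mem _
    · rw [Ideal.Quotient.eq_zero_iff_mem.mpr (zero_case m n i j (Or.inl ⟨by omega, by omega⟩))]
      exact zero_mem _
  · rw [Ideal.Quotient.eq_zero_iff_mem.mpr (zero_case m n i j (Or.inl ⟨by omega, by omega⟩))]
    exact zero_mem _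

lemma fin2_monomial (e : Fin 2 →₀ ℕ) (c : ℂ) :
    monomial e c = C c * (X 0 ^ (e 0) * X 1 ^ (e 1) : MvPolynomial (Fin 2) ℂ) := by
  have he : e = Finsupp.single 0 (e 0) + Finsupp.single 1 (e 1) := by
    ext a; fin_cases a <;> simp [Finsupp.single_apply]
  rw [X_pow_eq_monomial, X_pow_eq_monomial, monomial_mul, C_mul_monomial, ← he]
  norm_num

lemma span_top (m n : ℕ) : Submodule.span ℂ (Set.range (fam m n)) = ⊤ := by
  rw [eq_top_iff]
  rintro q -
  obtain ⟨p, rfl⟩ := Ideal.Quotient.mk_surjective q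
  induction p using MvPolynomial.induction_on' with
  | add p q hp hq => rw [map_add]; exact add_mem hp hq
  | monomial e c =>
    rw [fin2_monomial, mk_C_mul]
    exact Submodule.smul_mem _ _ (mem_span_pow m n (e 0) (e 1))

lemma NF_basis (m n : ℕ) (b : Fin (n+2) × Fin (m+2)) :
    NF m n (X 0 ^ (b.1:ℕ) * X 1 ^ (b.2:ℕ)) = Pi.single b 1 := by
  rw [X_pow_eq_monomial, X_pow_eq_monomial, monomial_mul, mul_one, NF_monomial]
  have h0 : ((Finsupp.single 0 (b.1:ℕ) + Finsupp.single 1 (b.2:ℕ) : Fin 2 →₀ ℕ)) 0 = b.1 := by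
    simp [Finsupp.single_apply]
  have h1 : ((Finsupp.single 0 (b.1:ℕ) + Finsupp.single 1 (b.2:ℕ) : Fin 2 →₀ ℕ)) 1 = b.2 := by
    simp [Finsupp.single_apply]
  rw [h0, h1, one_smul, vfun, dif_pos ⟨b.1.isLt, b.2.isLt⟩]

lemma fam_li (m n : ℕ) : LinearIndependent ℂ (fam m n) := by
  rw [linearIndependent_iff]
  intro l hl
  have hP : Finsupp.linearCombination ℂ
      (fun b : Fin (n+2) × Fin (m+2) => (X 0 ^ (b.1:ℕ) * X 1 ^ (b.2:ℕ) : MvPolynomial (Fin 2) ℂ))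
      l ∈ dualLoopJac (m+2) (n+2) := by
    rw [← Ideal.Quotient.eq_zero_iff_mem]
    have h := Finsupp.apply_linearCombination ℂ
      (Ideal.Quotient.mkₐ ℂ (dualLoopJac (m+2) (n+2))).toLinearMap
      (fun b : Fin (n+2) × Fin (m+2) => (X 0 ^ (b.1:ℕ) * X 1 ^ (b.2:ℕ) : MvPolynomial (Fin 2) ℂ)) l
    have h2 : (⇑(Ideal.Quotient.mkₐ ℂ (dualLoopJac (m+2) (n+2))).toLinearMap ∘
        (fun b : Fin (n+2) × Fin (m+2) => (X 0 ^ (b.1:ℕ) * X 1 ^ (b.2:ℕ) : MvPolynomial (Fin 2) ℂ)))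
        = fam m n := by
      funext b; simp [fam, Ideal.Quotient.mkₐ_eq_mk]
    rw [h2, hl] at h
    exact h
  have hNP := NF_Jac m n hP
  have hcomb := Finsupp.apply_linearCombination ℂ (NF m n)
    (fun b : Fin (n+2) × Fin (m+2) => (X 0 ^ (b.1:ℕ) * X 1 ^ (b.2:ℕ) : MvPolynomial (Fin 2) ℂ)) l
  rw [hNP] at hcomb
  have hNg : (⇑(NF m n) ∘
      (fun b : Fin (n+2) × Fin (m+2) => (X 0 ^ (b.1:ℕ) * X 1 ^ (b.2:ℕ) : MvPolynomial (Fin 2) ℂ)))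
      = fun b => (Pi.single b 1 : Fin (n+2) × Fin (m+2) → ℂ) :=
    funext (fun b => NF_basis m n b)
  rw [hNg] at hcomb
  have hstd : LinearIndependent ℂ
      (fun b : Fin (n+2) × Fin (m+2) => (Pi.single b 1 : Fin (n+2) × Fin (m+2) → ℂ)) := by
    have h := (Pi.basisFun ℂ (Fin (n+2) × Fin (m+2))).linearIndependent
    have hc : ⇑(Pi.basisFun ℂ (Fin (n+2) × Fin (m+2)))
        = fun b => (Pi.single b 1 : Fin (n+2) × Fin (m+2) → ℂ) := by
      funext b; rw [Pi.basisFun_apply]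
    rwa [hc] at h
  exact linearIndependent_iff.mp hstd l hcomb.symm


/-- The images of the monomials `X̄1^b1 * X̄2^b2` with `0 ≤ b1 < a2`,
`0 ≤ b2 < a1` form a `ℂ`-basis of the Milnor ring `Q_{W^T}`; in particular
`dim_ℂ Q_{W^T} = a1 * a2`. -/
theorem dualLoopMilnor_monomial_basis (a1 a2 : ℕ) (ha1 : 2 ≤ a1) (ha2 : 2 ≤ a2) :
    LinearIndependent ℂ
      (fun b : Fin a2 × Fin a1 =>
        Ideal.Quotient.mk (dualLoopJac a1 a2) (X 0 ^ (b.1 : ℕ) * X 1 ^ (b.2 : ℕ))) ∧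
    Submodule.span ℂ
      (Set.range (fun b : Fin a2 × Fin a1 =>
        Ideal.Quotient.mk (dualLoopJac a1 a2) (X 0 ^ (b.1 : ℕ) * X 1 ^ (b.2 : ℕ)))) = ⊤ ∧
    Module.finrank ℂ (MvPolynomial (Fin 2) ℂ ⧸ dualLoopJac a1 a2) = a1 * a2 := by
  obtain ⟨m, rfl⟩ : ∃ m, a1 = m+2 := ⟨a1-2, by omega⟩
  obtain ⟨n, rfl⟩ : ∃ n, a2 = n+2 := ⟨a2-2, by omega⟩
  refine ⟨fam_li m n, span_top m n, ?_⟩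
  have B : Module.Basis (Fin (n+2) × Fin (m+2)) ℂ (MvPolynomial (Fin 2) ℂ ⧸ dualLoopJac (m+2) (n+2)) :=
    Module.Basis.mk (fam_li m n) (span_top m n).ge
  rw [Module.finrank_eq_card_basis B, Fintype.card_prod, Fintype.card_fin, Fintype.card_fin,
    Nat.mul_comm]

end
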